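/- Let γ₁ < ω₀ < γ₂ be reals, N ≥ 1 an integer, and φ : [γ₁,γ₂] → ℝ a real-valued function that is N times continuously differentiable. Define A(t) := ∫_{ω₀}^{γ₂} φ(ω)·log|ω − ω₀|·e^{iωt} dω, Ã(t) := ∫_{γ₁}^{ω₀} φ(ω)·log|ω − ω₀|·e^{iωt} dω, and B(t) := ∫_{−ω₀}^{−γ₁} φ(−ω)·log|ω + ω₀|·e^{iωt} dω. Assume that as t → +∞: A(t) = ∑_{n=0}^{N−1} i^{n+1}·φ⁽ⁿ⁾(ω₀)·[ψ(n+1) − log t + iπ/2]·t^{−n−1}·e^{iω₀t} + o(t^{−N}) and B(t) = ∑_{n=0}^{N−1} i^{n+1}·(−1)ⁿ·φ⁽ⁿ⁾(ω₀)·[ψ(n+1) − log t + iπ/2]·t^{−n−1}·e^{−iω₀t} + o(t^{−N}) (these are Erdélyi's one-sided expansions). Then Ã(t) = conj(B(t)), and the two-sided Fourier integral ρ̂(t) := A(t) + Ã(t) = ∫_{γ₁}^{γ₂} φ(ω)·log|ω − ω₀|·e^{iωt} dω satisfies ρ̂(t) = −π·∑_{n=0}^{N−1} iⁿ·φ⁽ⁿ⁾(ω₀)·t^{−n−1}·e^{iω₀t}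 + o(t^{−N}) as t → +∞; in particular the log t terms cancel and the leading decay is proportional to 1/t. -/

import Mathlib

open Filter Asymptotics MeasureTheory

/-- The digamma function `ψ`, the logarithmic derivative of the Gamma function. -/
noncomputable def digamma (x : ℝ) : ℝ := deriv Real.Gamma x / Real.Gamma x

lemma intervalIntegrable_log_any (a b : ℝ) : IntervalIntegrable Real.log volume a b := by
  suffices h : ∀ c : ℝ, IntervalIntegrable Real.log volume 0 c by
    exact (h a).symm.trans (h b)
  have hpos : ∀ c : ℝ, 0 ≤ c → IntervalIntegrable Real.log volume 0 c := by
    intro c hc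
    have hg : IntervalIntegrable
        (fun x : ℝ => 2 * x ^ (-(1/2) : ℝ) + 2 * x ^ ((1/2) : ℝ)) volume 0 c :=
      ((intervalIntegral.intervalIntegrable_rpow' (by norm_num)).const_mul 2).add
        ((intervalIntegral.intervalIntegrable_rpow' (by norm_num)).const_mul 2)
    refine hg.mono_fun' Real.measurable_log.aestronglyMeasurable ?_
    rw [Filter.EventuallyLE, ae_restrict_iff' measurableSet_uIoc]
    refine Filter.Eventually.of_forall fun x hx => ?_
    rw [Set.uIoc_of_le hc] at hx
    have hx0 : 0 < x := hx.1
    have b1 : Real.log x ≤ 2 * x ^ ((1/2):ℝ) := by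
      have h := Real.log_le_rpow_div hx0.le (by norm_num : (0:ℝ) < 1/2)
      linarith
    have b2 : -Real.log x ≤ 2 * x ^ (-(1/2):ℝ) := by
      have h := Real.log_le_rpow_div (inv_nonneg.mpr hx0.le) (by norm_num : (0:ℝ) < 1/2)
      rw [Real.log_inv, Real.inv_rpow hx0.le, ← Real.rpow_neg hx0.le] at h
      linarith
    have hp1 : 0 ≤ x ^ ((1/2):ℝ) := Real.rpow_nonneg hx0.le _
    have hp2 : 0 ≤ x ^ (-(1/2):ℝ) := Real.rpow_nonneg hx0.le _
    rw [Real.norm_eq_abs]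
    exact abs_le.mpr ⟨by linarith, by linarith⟩
  intro c
  rcases le_total 0 c with hc | hc
  · exact hpos c hc
  · have h2 := (IntervalIntegrable.iff_comp_neg (by simp)).mp (hpos (-c) (by linarith))
    simpa [Real.log_neg_eq_log] using h2

lemma key_term (n : ℕ) (c d p e : ℂ) :
    Complex.I ^ (n+1) * c * (d + Complex.I * ↑Real.pi / 2) * p * e
      + (-Complex.I) ^ (n+1) * (-1:ℂ)^n * c * (d - Complex.I * ↑Real.pi / 2) * p * e
    = -↑Real.pi * (Complex.I ^ n * c * p * e) := by
  have h1 : (-Complex.I) ^ (n+1) * (-1:ℂ)^n = -(Complex.I ^ (n+1)) := by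
    rw [neg_pow, mul_right_comm, ← pow_add]
    rw [Odd.neg_one_pow ⟨n, by ring⟩, neg_one_mul]
  rw [h1]
  linear_combination (↑Real.pi * Complex.I ^ n * c * p * e) * Complex.I_sq

/-- given Erdélyi's one-sided asymptotic expansions for the Fourier integrals
`A(t)` (over `[ω₀,γ₂]`) and `B(t)` (over `[−ω₀,−γ₁]`, with `φ(−·)`), the complementary
integral satisfies `Ã(t) = conj B(t)`, and the two-sided Fourier integral
`ρ̂(t) = A(t) + Ã(t) = ∫_{γ₁}^{γ₂} φ(ω) log|ω−ω₀| e^{iωt} dω` has the asymptotic expansion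
`ρ̂(t) = −π ∑_{n<N} iⁿ φ⁽ⁿ⁾(ω₀) t^{−n−1} e^{iω₀t} + o(t^{−N})` as `t → +∞`: the `log t`
terms cancel and the leading decay is proportional to `1/t`. -/
theorem two_sided_fourier_log_singularity (γ₁ γ₂ ω₀ : ℝ) (h₁ : γ₁ < ω₀) (h₂ : ω₀ < γ₂)
    (N : ℕ) (hN : 1 ≤ N) (φ : ℝ → ℝ)
    (hφ : ContDiffOn ℝ N φ (Set.Icc γ₁ γ₂))
    (A Atil B : ℝ → ℂ)
    (hA : ∀ t : ℝ, A t = ∫ ω in ω₀..γ₂,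
      (φ ω * Real.log |ω - ω₀| : ℂ) * Complex.exp (Complex.I * ω * t))
    (hAtil : ∀ t : ℝ, Atil t = ∫ ω in γ₁..ω₀,
      (φ ω * Real.log |ω - ω₀| : ℂ) * Complex.exp (Complex.I * ω * t))
    (hB : ∀ t : ℝ, B t = ∫ ω in (-ω₀)..(-γ₁),
      (φ (-ω) * Real.log |ω + ω₀| : ℂ) * Complex.exp (Complex.I * ω * t))
    (hAasym :
      (fun t : ℝ => A t - ∑ n ∈ Finset.range N,
        Complex.I ^ (n + 1) * ((iteratedDerivWithin n φ (Set.Icc γ₁ γ₂) ω₀ : ℝ) : ℂ) *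
          ((digamma (n + 1) : ℂ) - (Real.log t : ℂ) + Complex.I * Real.pi / 2) *
          ((t : ℂ) ^ (n + 1))⁻¹ * Complex.exp (Complex.I * ω₀ * t))
        =o[atTop] fun t : ℝ => (t ^ N)⁻¹)
    (hBasym :
      (fun t : ℝ => B t - ∑ n ∈ Finset.range N,
        Complex.I ^ (n + 1) * (-1 : ℂ) ^ n *
          ((iteratedDerivWithin n φ (Set.Icc γ₁ γ₂) ω₀ : ℝ) : ℂ) *
          ((digamma (n + 1) : ℂ) - (Real.log t : ℂ) + Complex.I * Real.pi / 2) *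
          ((t : ℂ) ^ (n + 1))⁻¹ * Complex.exp (-(Complex.I * ω₀ * t)))
        =o[atTop] fun t : ℝ => (t ^ N)⁻¹) :
    (∀ t : ℝ, Atil t = starRingEnd ℂ (B t)) ∧
    (∀ t : ℝ, A t + Atil t = ∫ ω in γ₁..γ₂,
      (φ ω * Real.log |ω - ω₀| : ℂ) * Complex.exp (Complex.I * ω * t)) ∧
    ((fun t : ℝ => A t + Atil t - (-Real.pi) * ∑ n ∈ Finset.range N,
        Complex.I ^ n * ((iteratedDerivWithin n φ (Set.Icc γ₁ γ₂) ω₀ : ℝ) : ℂ) *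
          ((t : ℂ) ^ (n + 1))⁻¹ * Complex.exp (Complex.I * ω₀ * t))
      =o[atTop] fun t : ℝ => (t ^ N)⁻¹) := by
    -- integrability of the integrand on subintervals of [γ₁, γ₂]
  have hInt : ∀ (t a b : ℝ), a ∈ Set.Icc γ₁ γ₂ → b ∈ Set.Icc γ₁ γ₂ →
      IntervalIntegrable
        (fun ω : ℝ => (φ ω * Real.log |ω - ω₀| : ℂ) * Complex.exp (Complex.I * ω * t))
        volume a b := by
    intro t a b ha hb
    have h0 : IntervalIntegrable (fun ω : ℝ => Real.log (ω - ω₀)) volume a b := by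
      have := (intervalIntegrable_log_any (a - ω₀) (b - ω₀)).comp_sub_right ω₀
      simpa using this
    have h1 : IntervalIntegrable (fun ω : ℝ => φ ω * Real.log (ω - ω₀)) volume a b :=
      h0.continuousOn_mul ((hφ.continuousOn).mono (Set.uIcc_subset_Icc ha hb))
    have h2 : IntervalIntegrable (fun ω : ℝ => ((φ ω * Real.log (ω - ω₀) : ℝ) : ℂ))
        volume a b := ⟨h1.1.ofReal, h1.2.ofReal⟩
    have hc : ContinuousOn (fun ω : ℝ => Complex.exp (Complex.I * ω * t)) (Set.uIcc a b) := by
      fun_prop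
    have h3 := h2.mul_continuousOn hc
    simpa only [Complex.ofReal_mul, Real.log_abs] using h3
  have hmem₁ : γ₁ ∈ Set.Icc γ₁ γ₂ := ⟨le_rfl, by linarith⟩
  have hmem₀ : ω₀ ∈ Set.Icc γ₁ γ₂ := ⟨by linarith, by linarith⟩
  have hmem₂ : γ₂ ∈ Set.Icc γ₁ γ₂ := ⟨by linarith, le_rfl⟩
  -- Part 1
  have part1 : ∀ t : ℝ, Atil t = starRingEnd ℂ (B t) := by
    intro t
    have key : (starRingEnd ℂ) (Atil t) = B t := by
      rw [hAtil t, hB t]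
      rw [← intervalIntegral.integral_comp_neg
        (fun ω => (φ (-ω) * Real.log |ω + ω₀| : ℂ) * Complex.exp (Complex.I * ω * t))]
      have hcc := ContinuousLinearMap.intervalIntegral_comp_comm
        Complex.conjCLE.toContinuousLinearMap (hInt t γ₁ ω₀ hmem₁ hmem₀)
      simp only [ContinuousLinearEquiv.coe_coe, Complex.conjCLE_apply] at hcc
      rw [← hcc]
      refine intervalIntegral.integral_congr fun ω _ => ?_
      have habs : |-ω + ω₀| = |ω - ω₀| := by rw [← abs_neg]; ring_nf
      simp only [map_mul, Complex.conj_ofReal, Complex.conj_I, neg_neg,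
        Complex.ofReal_neg, ← Complex.exp_conj, map_mul, habs]
      ring_nf
    rw [← key, Complex.conj_conj]
  refine ⟨part1, fun t => ?_, ?_⟩
  · rw [hAtil t, hA t, add_comm]
    exact intervalIntegral.integral_add_adjacent_intervals
      (hInt t γ₁ ω₀ hmem₁ hmem₀) (hInt t ω₀ γ₂ hmem₀ hmem₂)
  · -- asymptotics
    set SA : ℝ → ℂ := fun t => ∑ n ∈ Finset.range N,
        Complex.I ^ (n + 1) * ((iteratedDerivWithin n φ (Set.Icc γ₁ γ₂) ω₀ : ℝ) : ℂ) *
          ((digamma (n + 1) : ℂ) - (Real.log t : ℂ) + Complex.I * Real.pi / 2) *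
          ((t : ℂ) ^ (n + 1))⁻¹ * Complex.exp (Complex.I * ω₀ * t) with hSA
    set SB : ℝ → ℂ := fun t => ∑ n ∈ Finset.range N,
        Complex.I ^ (n + 1) * (-1 : ℂ) ^ n *
          ((iteratedDerivWithin n φ (Set.Icc γ₁ γ₂) ω₀ : ℝ) : ℂ) *
          ((digamma (n + 1) : ℂ) - (Real.log t : ℂ) + Complex.I * Real.pi / 2) *
          ((t : ℂ) ^ (n + 1))⁻¹ * Complex.exp (-(Complex.I * ω₀ * t)) with hSB
    have htar : ∀ t : ℝ, SA t + (starRingEnd ℂ) (SB t)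
        = (-Real.pi : ℂ) * ∑ n ∈ Finset.range N,
          Complex.I ^ n * ((iteratedDerivWithin n φ (Set.Icc γ₁ γ₂) ω₀ : ℝ) : ℂ) *
            ((t : ℂ) ^ (n + 1))⁻¹ * Complex.exp (Complex.I * ω₀ * t) := by
      intro t
      rw [hSA, hSB]
      simp only [map_sum, Finset.mul_sum, ← Finset.sum_add_distrib]
      refine Finset.sum_congr rfl fun n _ => ?_
      simp only [map_mul, map_pow, map_sub, map_add, map_div₀, map_inv₀, map_neg, map_one,
        map_ofNat, Complex.conj_I, Complex.conj_ofReal, ← Complex.exp_conj,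
        neg_mul, neg_neg]
      linear_combination key_term n
        ((iteratedDerivWithin n φ (Set.Icc γ₁ γ₂) ω₀ : ℝ) : ℂ)
        (((digamma (n + 1) : ℝ) : ℂ) - ((Real.log t : ℝ) : ℂ))
        (((t : ℂ) ^ (n + 1))⁻¹) (Complex.exp (Complex.I * ω₀ * t))
    have hBconj : (fun t : ℝ => (starRingEnd ℂ) (B t - SB t)) =o[atTop]
        (fun t : ℝ => (t ^ N)⁻¹) := by
      refine Asymptotics.isLittleO_norm_left.mp ?_
      simpa only [RCLike.norm_conj] using hBasym.norm_left
    have heq : (fun t : ℝ => A t + Atil t - (-Real.pi) * ∑ n ∈ Finset.range N,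
        Complex.I ^ n * ((iteratedDerivWithin n φ (Set.Icc γ₁ γ₂) ω₀ : ℝ) : ℂ) *
          ((t : ℂ) ^ (n + 1))⁻¹ * Complex.exp (Complex.I * ω₀ * t))
        = fun t => (A t - SA t) + (starRingEnd ℂ) (B t - SB t) := by
      funext t
      rw [part1 t, ← htar t, map_sub]
      ring
    rw [heq]
    exact hAasym.add hBconj
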